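/- With B in canonical block form and B_r := r² D_r B D_{1/r} where D_r = diag(r·I_{m₀}, r³·I_{m₁}, ..., r^{2κ+1}·I_{m_κ}), one has B_r = B for every r > 0 if and only if all blocks B_{j,k} with j ≤ k (the blocks on and above the block diagonal, other than the subdiagonal blocks B₁,...,B_κ) vanish. -/
import Mathlib


/-- With `B` in canonical block form (block index `blk`, entries
strictly below the subdiagonal vanishing) and
`B_r := r² D_r B D_{1/r}`, `D_r = diag(r·I_{m₀}, r³·I_{m₁},...,r^{2κ+1}·I_{m_κ})`,
whose `(p,q)` entry is `r^{2(blk q - blk p + 1)} B p q` (so the subdiagonal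
blocks `blk p = blk q + 1` are unscaled), one has `B_r = B` for every `r > 0`
if and only if all blocks `B_{j,k}` with `j ≤ k` (the blocks on and above the
block diagonal) vanish. -/
theorem stmt_8 (N κ : ℕ) (blk : Fin N → ℕ) (hblk : ∀ i, blk i ≤ κ)
    (B : Matrix (Fin N) (Fin N) ℝ)
    (hlower : ∀ p q : Fin N, blk q + 1 < blk p → B p q = 0)
    (Br : ℝ → Matrix (Fin N) (Fin N) ℝ)
    (hBr : ∀ (r : ℝ) (p q : Fin N),
      Br r p q = r ^ (2 * ((blk q : ℤ) - (blk p : ℤ) + 1)) * B p q) :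
    (∀ r : ℝ, 0 < r → Br r = B) ↔
      (∀ p q : Fin N, blk p ≤ blk q → B p q = 0) := by
  constructor
  · intro h p q hpq
    have h2 := h 2 (by norm_num)
    have := congrFun (congrFun h2 p) q
    rw [hBr] at this
    by_contra hB
    have hexp : (0:ℤ) < 2 * ((blk q : ℤ) - (blk p : ℤ) + 1) := by
      have : (blk p : ℤ) ≤ (blk q : ℤ) := by exact_mod_cast hpq
      omega
    have h1 : (2:ℝ) ^ (2 * ((blk q : ℤ) - (blk p : ℤ) + 1)) = 1 := by
      have := mul_right_cancel₀ hB (this.trans (one_mul (B p q)).symm)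
      exact this
    have h2' : (1:ℝ) < (2:ℝ) ^ (2 * ((blk q : ℤ) - (blk p : ℤ) + 1)) :=
      one_lt_zpow₀ (by norm_num) hexp
    linarith
  · intro h r hr
    ext p q
    rw [hBr]
    rcases lt_trichotomy (blk q + 1) (blk p) with hlt | heq | hgt
    · rw [hlower p q hlt]; ring
    · have : 2 * ((blk q : ℤ) - (blk p : ℤ) + 1) = 0 := by omega
      rw [this, zpow_zero, one_mul]
    · have : blk p ≤ blk q := by omega
      rw [h p q this]; ring
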